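/- The function x ↦ x·(1/x + 1/e - e^{-1/x}) is decreasing for x ≥ 1. -/

import Mathlib

lemma hd_aux (x : ℝ) (hx : 0 < x) :
    HasDerivAt (fun x : ℝ => x * (1 / x + 1 / Real.exp 1 - Real.exp (-1 / x)))
      (1 / Real.exp 1 - Real.exp (-1 / x) * (1 + 1 / x)) x := by
  have hx0 : x ≠ 0 := ne_of_gt hx
  have h1 : HasDerivAt (fun x : ℝ => 1 / x) (-(1 / x ^ 2)) x := by
    simpa [one_div] using hasDerivAt_inv hx0
  have h2 : HasDerivAt (fun x : ℝ => -1 / x) (1 / x ^ 2) x := by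
    simpa [neg_div, Pi.neg_def] using h1.neg
  have h3 : HasDerivAt (fun x : ℝ => Real.exp (-1 / x))
      (Real.exp (-1 / x) * (1 / x ^ 2)) x := h2.exp
  have h4 : HasDerivAt (fun x : ℝ => 1 / x + 1 / Real.exp 1 - Real.exp (-1 / x))
      (-(1 / x ^ 2) - Real.exp (-1 / x) * (1 / x ^ 2)) x := (h1.add_const _).sub h3
  have h5 := (hasDerivAt_id x).fun_mul h4
  refine h5.congr_deriv ?_
  simp only [id]
  field_simp
  ring

theorem antitone_aux :
    AntitoneOn (fun x : ℝ => x * (1 / x + 1 / Real.exp 1 - Real.exp (-1 / x)))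
      (Set.Ici 1) := by
  have hint : interior (Set.Ici (1:ℝ)) = Set.Ioi 1 := interior_Ici
  apply antitoneOn_of_deriv_nonpos (convex_Ici 1)
  · apply ContinuousOn.mul continuousOn_id
    apply ContinuousOn.sub
    · exact (continuousOn_const.div continuousOn_id (fun x hx => by
        have : (1:ℝ) ≤ x := hx; positivity)).add continuousOn_const
    · apply Real.continuous_exp.comp_continuousOn
      exact (continuousOn_const.div continuousOn_id (fun x hx => by
        have : (1:ℝ) ≤ x := hx; positivity))
  · rw [hint]
    intro x hx
    have hx0 : (0:ℝ) < x := lt_trans one_pos hx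
    exact (hd_aux x hx0).differentiableAt.differentiableWithinAt
  · rw [hint]
    intro x hx
    have hx1 : (1:ℝ) < x := hx
    have hx0 : (0:ℝ) < x := lt_trans one_pos hx1
    rw [(hd_aux x hx0).deriv]
    have hz0 : (0:ℝ) < 1 / x := by positivity
    have hz1 : 1 / x ≤ 1 := by
      rw [div_le_one hx0]; linarith
    have key : Real.exp (1 / x - 1) ≤ 1 + 1 / x := by
      have h1 : Real.exp (1 / x - 1) ≤ 1 := Real.exp_le_one_iff.mpr (by linarith)
      linarith
    have hmul : Real.exp (1 / x - 1) * Real.exp (-1 / x) = 1 / Real.exp 1 := by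
      rw [← Real.exp_add]
      have : 1 / x - 1 + -1 / x = -1 := by ring
      rw [this, Real.exp_neg, one_div]
    have hep : 0 < Real.exp (-1 / x) := Real.exp_pos _
    nlinarith [key, hep]
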